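/- For every k ≥ 0 and every integer p with 1 ≤ p ≤ m-1, the relation R_A(k,p) holds: f₀ ∘ f₁^{p·m^k - 1} ∘ v_k = v_k as self-maps of ℕ → Fin m. Moreover, for every k ≥ 0 the relation R_B(k) holds: f₀ ∘ f₁^{m^k + m^{k+1} - 1} ∘ v_k = f₁^{m^{k+1}} ∘ v_k. -/

import Mathlib

/- The automaton transformation `f₀` of the Mealy automaton `I_m` acting on
infinite words `u : ℕ → Fin m`: if `u` is constantly `m-1` it returns the
constant `0` sequence; otherwise, with `j` the least index where `u j ≠ m-1`,
it sets positions `≤ j` to `0` and keeps the rest. -/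
open Classical in
noncomputable def f0 (m : ℕ) (u : ℕ → Fin m) : ℕ → Fin m :=
  if h : ∃ j, (u j : ℕ) ≠ m - 1 then
    fun i => if i ≤ Nat.find h then ⟨0, (u 0).pos⟩ else u i
  else fun _ => ⟨0, (u 0).pos⟩

/- The automaton transformation `f₁` (the base-`m` odometer): if `u` is
constantly `m-1` it returns the constant `0` sequence; otherwise, with `j` the
least index where `u j ≠ m-1`, positions `< j` become `0`, position `j` is
incremented and the rest are kept. -/
open Classical in
noncomputable def f1 (m : ℕ) (u : ℕ → Fin m) : ℕ → Fin m :=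
  if h : ∃ j, (u j : ℕ) ≠ m - 1 then
    fun i =>
      if i < Nat.find h then ⟨0, (u 0).pos⟩
      else if hie : i = Nat.find h then
        ⟨(u i : ℕ) + 1, by
          have h2 := Nat.find_spec h
          rw [← hie] at h2
          have h3 := (u i).isLt
          have h4 := (u 0).pos
          omega⟩
      else u i
  else fun _ => ⟨0, (u 0).pos⟩

/- The transformations `v_k`: `v₀ = f₀` and `v_k = f₀ ∘ f₁^{m^k - 1} ∘ v_{k-1}`. -/
noncomputable def vW (m : ℕ) : ℕ → (ℕ → Fin m) → ℕ → Fin m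
  | 0 => f0 m
  | k + 1 => f0 m ∘ (f1 m)^[m ^ (k + 1) - 1] ∘ vW m k

/-! ### Auxiliary arithmetic lemmas -/

lemma mul_pred_helper (P A : ℕ) (hP : 0 < P) (hA : 0 < A) :
    P * A - 1 = P * (A - 1) + (P - 1) := by
  cases A with
  | zero => omega
  | succ A' =>
    have h1 : P * (A' + 1) = P * A' + P := by ring
    have h2 : P * (A' + 1 - 1) = P * A' := by simp
    omega

lemma mod_pow_of_digits_max {m : ℕ} (hm : 2 ≤ m) (t j : ℕ)
    (hj : ∀ i, i < j → t / m ^ i % m = m - 1) :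
    t % m ^ j + 1 = m ^ j := by
  induction j with
  | zero => simp [Nat.mod_one]
  | succ j ih =>
    have h1 : t % m ^ (j + 1) = t % m ^ j + m ^ j * (t / m ^ j % m) := by
      rw [pow_succ]; exact Nat.mod_mul
    have h2 := ih (fun i hi => hj i (by omega))
    have h3 := hj j (by omega)
    have h4 : m ^ (j + 1) = m ^ j * m := pow_succ m j
    have h5 : m ^ j * (m - 1) + m ^ j = m ^ j * m := by
      have := mul_pred_helper (m ^ j) m (pow_pos (by omega) j) (by omega)
      have h6 : 0 < m ^ j * m := Nat.mul_pos (pow_pos (by omega) j) (by omega)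
      have h7 : 0 < m ^ j := pow_pos (by omega) j
      omega
    rw [h1, h3, h4]
    omega

lemma succ_digits {m : ℕ} (hm : 2 ≤ m) (t j : ℕ)
    (hj : ∀ i, i < j → t / m ^ i % m = m - 1) (hne : t / m ^ j % m ≠ m - 1) :
    (∀ i, i < j → (t + 1) / m ^ i % m = 0) ∧
    ((t + 1) / m ^ j % m = t / m ^ j % m + 1) ∧
    (∀ i, j < i → (t + 1) / m ^ i = t / m ^ i) := by
  have hm0 : 0 < m := by omega
  have hmod := mod_pow_of_digits_max hm t j hj
  have hdm := Nat.div_add_mod t (m ^ j)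
  have key : t + 1 = m ^ j * (t / m ^ j + 1) := by
    have : m ^ j * (t / m ^ j + 1) = m ^ j * (t / m ^ j) + m ^ j := by ring
    omega
  have hdj : (t + 1) / m ^ j = t / m ^ j + 1 := by
    rw [key, Nat.mul_div_cancel_left _ (pow_pos hm0 j)]
  have hrm : t / m ^ j % m + 1 < m := by
    have := Nat.mod_lt (t / m ^ j) hm0; omega
  refine ⟨?_, ?_, ?_⟩
  · intro i hi
    have hdvd : m ^ (i + 1) ∣ t + 1 := by
      rw [key]; exact dvd_mul_of_dvd_left (pow_dvd_pow m (by omega)) _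
    rw [← Nat.mod_mul_right_div_self, ← pow_succ, Nat.mod_eq_zero_of_dvd hdvd, Nat.zero_div]
  · rw [hdj]
    set a := t / m ^ j with ha
    have h2 : m * (a / m) + a % m = a := Nat.div_add_mod a m
    have h3 : a + 1 = m * (a / m) + (a % m + 1) := by omega
    rw [h3, Nat.mul_add_mod, Nat.mod_eq_of_lt hrm]
  · intro i hi
    have e1 : m ^ i = m ^ (j + 1) * m ^ (i - j - 1) := by
      rw [← pow_add]; congr 1; omega
    have hj1 : (t + 1) / m ^ (j + 1) = t / m ^ (j + 1) := by
      rw [pow_succ]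
      rw [← Nat.div_div_eq_div_mul, ← Nat.div_div_eq_div_mul, hdj]
      set a := t / m ^ j with ha
      have h2 : m * (a / m) + a % m = a := Nat.div_add_mod a m
      have h3 : a + 1 = m * (a / m) + (a % m + 1) := by omega
      rw [h3, Nat.mul_add_div hm0, Nat.div_eq_of_lt hrm, Nat.add_zero]
    rw [e1]
    simp only [← Nat.div_div_eq_div_mul]
    rw [hj1]

lemma pred_pow_digit {m : ℕ} (hm : 2 ≤ m) {k i : ℕ} (hik : i ≤ k) :
    (m ^ (k + 1) - 1) / m ^ i % m = m - 1 := by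
  have hm0 : 0 < m := by omega
  have hp : 0 < m ^ i := pow_pos hm0 i
  have hq : 0 < m ^ (k - i) := pow_pos hm0 _
  have e1 : m ^ (k + 1) = m ^ i * (m * m ^ (k - i)) := by
    rw [show m * m ^ (k - i) = m ^ (k - i + 1) from (pow_succ' m _).symm, ← pow_add]
    congr 1; omega
  have key := mul_pred_helper (m ^ i) (m * m ^ (k - i)) hp (Nat.mul_pos hm0 hq)
  rw [e1, key, Nat.mul_add_div hp, Nat.div_eq_of_lt (by omega), Nat.add_zero]
  have key2 := mul_pred_helper m (m ^ (k - i)) hm0 hq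
  rw [key2, Nat.mul_add_mod, Nat.mod_eq_of_lt (by omega)]

open Classical in
lemma f1_iter_digit (m : ℕ) (hm : 2 ≤ m) (k : ℕ) (w : ℕ → Fin m)
    (hw : ∀ i, i ≤ k → (w i : ℕ) = 0) :
    ∀ t, t < m ^ (k + 1) → ∀ i,
      (((f1 m)^[t] w) i : ℕ) = if i ≤ k then t / m ^ i % m else (w i : ℕ) := by
  have hm0 : 0 < m := by omega
  intro t
  induction t with
  | zero =>
    intro _ i
    simp only [Function.iterate_zero, id_eq, Nat.zero_div, Nat.zero_mod]
    split
    · exact hw i ‹_›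
    · rfl
  | succ t ih =>
    intro ht i
    have ht' : t < m ^ (k + 1) := by omega
    have ihu := ih ht'
    have hex0 : ∃ i0, i0 ≤ k ∧ t / m ^ i0 % m ≠ m - 1 := by
      by_contra hcon
      push_neg at hcon
      have hA := mod_pow_of_digits_max hm t (k + 1) (fun i hi => hcon i (by omega))
      have hB : t % m ^ (k + 1) = t := Nat.mod_eq_of_lt ht'
      omega
    obtain ⟨i0, hi0k, hi0⟩ := hex0
    have hex : ∃ j, (((f1 m)^[t] w) j : ℕ) ≠ m - 1 := by
      refine ⟨i0, ?_⟩
      rw [ihu i0, if_pos hi0k]; exact hi0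
    rw [Function.iterate_succ_apply']
    simp only [f1, dif_pos hex]
    have hJk : Nat.find hex ≤ k :=
      le_trans (Nat.find_min' hex (by rw [ihu i0, if_pos hi0k]; exact hi0)) hi0k
    have hdJ : t / m ^ (Nat.find hex) % m ≠ m - 1 := by
      have hspec := Nat.find_spec hex
      rw [ihu _, if_pos hJk] at hspec
      exact hspec
    have hdlt : ∀ i', i' < Nat.find hex → t / m ^ i' % m = m - 1 := by
      intro i' hi'
      have hni := Nat.find_min hex hi'
      push_neg at hni
      rw [ihu i', if_pos (by omega)] at hni
      exact hni
    obtain ⟨s1, s2, s3⟩ := succ_digits hm t (Nat.find hex) hdlt hdJ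
    rcases lt_trichotomy i (Nat.find hex) with hlt | heq | hgt
    · rw [if_pos hlt, if_pos (show i ≤ k by omega), s1 i hlt]
    · rw [if_neg (show ¬ i < Nat.find hex by omega), dif_pos heq]
      show (((f1 m)^[t] w) i : ℕ) + 1 = _
      rw [if_pos (show i ≤ k by omega)]
      have e := ihu i
      rw [if_pos (show i ≤ k by omega)] at e
      rw [e, heq, s2]
    · rw [if_neg (show ¬ i < Nat.find hex by omega),
        dif_neg (show ¬ i = Nat.find hex by omega), ihu i]
      by_cases hik : i ≤ k
      · rw [if_pos hik, if_pos hik, s3 i hgt]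
      · rw [if_neg hik, if_neg hik]

lemma f1_iter_allmax (m : ℕ) (hm : 2 ≤ m) (k : ℕ) (w : ℕ → Fin m)
    (hw : ∀ i, i ≤ k → (w i : ℕ) = 0) :
    ∀ i, i ≤ k → (((f1 m)^[m ^ (k + 1) - 1] w) i : ℕ) = m - 1 := by
  intro i hik
  have hpos : 0 < m ^ (k + 1) := pow_pos (by omega) _
  have h1 := f1_iter_digit m hm k w hw (m ^ (k + 1) - 1) (by omega) i
  rw [if_pos hik] at h1
  rw [h1, pred_pow_digit hm hik]

open Classical in
lemma f0_eq (m : ℕ) (hm : 2 ≤ m) (k : ℕ) (x : ℕ → Fin m)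
    (hlt : ∀ i, i < k → (x i : ℕ) = m - 1) (hk : (x k : ℕ) ≠ m - 1) :
    ∀ i, (f0 m x i : ℕ) = if i ≤ k then 0 else (x i : ℕ) := by
  have hex : ∃ j, (x j : ℕ) ≠ m - 1 := ⟨k, hk⟩
  have hfind : Nat.find hex = k := by
    rw [Nat.find_eq_iff]
    exact ⟨hk, fun n hn => by simpa using hlt n hn⟩
  intro i
  simp only [f0, dif_pos hex, hfind]
  by_cases h : i ≤ k <;> simp [h]

open Classical in
lemma f0_zeros (m : ℕ) (hm : 2 ≤ m) (k : ℕ) (x : ℕ → Fin m)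
    (hx : ∀ i, i ≤ k → (x i : ℕ) = m - 1) :
    ∀ i, i ≤ k + 1 → (f0 m x i : ℕ) = 0 := by
  intro i hik
  by_cases hex : ∃ j, (x j : ℕ) ≠ m - 1
  · simp only [f0, dif_pos hex]
    have hfind : k < Nat.find hex := by
      by_contra hcon
      push_neg at hcon
      exact Nat.find_spec hex (hx _ hcon)
    rw [if_pos (by omega)]
  · simp only [f0, dif_neg hex]

open Classical in
lemma f1_zeros (m : ℕ) (hm : 2 ≤ m) (k : ℕ) (x : ℕ → Fin m)
    (hx : ∀ i, i ≤ k → (x i : ℕ) = m - 1) :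
    ∀ i, i ≤ k → (f1 m x i : ℕ) = 0 := by
  intro i hik
  by_cases hex : ∃ j, (x j : ℕ) ≠ m - 1
  · simp only [f1, dif_pos hex]
    have hfind : k < Nat.find hex := by
      by_contra hcon
      push_neg at hcon
      exact Nat.find_spec hex (hx _ hcon)
    rw [if_pos (by omega)]
  · simp only [f1, dif_neg hex]

lemma vW_zeros (m : ℕ) (hm : 2 ≤ m) : ∀ k (u : ℕ → Fin m) i, i ≤ k → (vW m k u i : ℕ) = 0 := by
  intro k
  induction k with
  | zero =>
    intro u i hi
    obtain rfl : i = 0 := by omega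
    classical
    by_cases hex : ∃ j, (u j : ℕ) ≠ m - 1
    · simp only [vW, f0, dif_pos hex]
      rw [if_pos (Nat.zero_le _)]
    · simp only [vW, f0, dif_neg hex]
  | succ k ih =>
    intro u i hi
    have hx : ∀ i', i' ≤ k → (((f1 m)^[m ^ (k + 1) - 1] (vW m k u)) i' : ℕ) = m - 1 :=
      f1_iter_allmax m hm k (vW m k u) (fun i' hi' => ih u i' hi')
    simp only [vW, Function.comp_apply]
    exact f0_zeros m hm k _ hx i hi

lemma RA_core (m : ℕ) (hm : 2 ≤ m) (k p : ℕ) (hp1 : 1 ≤ p) (hp2 : p ≤ m - 1)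
    (w : ℕ → Fin m) (hw : ∀ i, i ≤ k → (w i : ℕ) = 0) :
    f0 m ((f1 m)^[p * m ^ k - 1] w) = w := by
  have hm0 : 0 < m := by omega
  have hpk : 0 < m ^ k := pow_pos hm0 k
  have ht : p * m ^ k - 1 < m ^ (k + 1) := by
    have h1 : p * m ^ k ≤ (m - 1) * m ^ k := Nat.mul_le_mul_right _ hp2
    have h2 : (m - 1) * m ^ k < m ^ (k + 1) := by
      rw [pow_succ, mul_comm (m ^ k) m]
      exact (Nat.mul_lt_mul_right hpk).mpr (by omega)
    omega
  have hdiv : ∀ i, i ≤ k → (p * m ^ k - 1) / m ^ i = p * m ^ (k - i) - 1 := by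
    intro i hik
    have hpow : m ^ i * m ^ (k - i) = m ^ k := by rw [← pow_add]; congr 1; omega
    have e : p * m ^ k = m ^ i * (p * m ^ (k - i)) := by
      calc p * m ^ k = p * (m ^ i * m ^ (k - i)) := by rw [hpow]
        _ = m ^ i * (p * m ^ (k - i)) := by ring
    have hApos : 0 < p * m ^ (k - i) := Nat.mul_pos (by omega) (pow_pos hm0 _)
    have key := mul_pred_helper (m ^ i) (p * m ^ (k - i)) (pow_pos hm0 i) hApos
    have hip : 0 < m ^ i := pow_pos hm0 i
    rw [e, key, Nat.mul_add_div hip, Nat.div_eq_of_lt (by omega), Nat.add_zero]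
  have hdlt : ∀ i, i < k → (p * m ^ k - 1) / m ^ i % m = m - 1 := by
    intro i hik
    have e2 : p * m ^ (k - i) = m * (p * m ^ (k - i - 1)) := by
      have hpow : m * m ^ (k - i - 1) = m ^ (k - i) := by
        rw [← pow_succ']; congr 1; omega
      calc p * m ^ (k - i) = p * (m * m ^ (k - i - 1)) := by rw [hpow]
        _ = m * (p * m ^ (k - i - 1)) := by ring
    have hBpos : 0 < p * m ^ (k - i - 1) := Nat.mul_pos (by omega) (pow_pos hm0 _)
    have key := mul_pred_helper m (p * m ^ (k - i - 1)) hm0 hBpos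
    rw [hdiv i (le_of_lt hik), e2, key, Nat.mul_add_mod, Nat.mod_eq_of_lt (by omega)]
  have hdk : (p * m ^ k - 1) / m ^ k % m = p - 1 := by
    have := hdiv k le_rfl
    simp only [Nat.sub_self, pow_zero, mul_one] at this
    rw [this, Nat.mod_eq_of_lt (by omega)]
  have hx := f1_iter_digit m hm k w hw (p * m ^ k - 1) ht
  have hxlt : ∀ i, i < k → (((f1 m)^[p * m ^ k - 1] w) i : ℕ) = m - 1 := by
    intro i hik
    rw [hx i, if_pos (le_of_lt hik), hdlt i hik]
  have hxk : (((f1 m)^[p * m ^ k - 1] w) k : ℕ) ≠ m - 1 := by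
    rw [hx k, if_pos le_rfl, hdk]
    omega
  funext i
  apply Fin.val_injective
  rw [f0_eq m hm k _ hxlt hxk i]
  by_cases hik : i ≤ k
  · rw [if_pos hik, hw i hik]
  · rw [if_neg hik, hx i, if_neg hik]

/-- The relations `R_A(k,p) : f₀ f₁^{p m^k - 1} v_k = v_k` (for `1 ≤ p ≤ m-1`)
and `R_B(k) : f₀ f₁^{m^k + m^{k+1} - 1} v_k = f₁^{m^{k+1}} v_k` hold. -/
theorem relations_RA_RB (m : ℕ) (hm : 2 ≤ m) :
    (∀ k p : ℕ, 1 ≤ p → p ≤ m - 1 →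
      f0 m ∘ (f1 m)^[p * m ^ k - 1] ∘ vW m k = vW m k) ∧
    (∀ k : ℕ,
      f0 m ∘ (f1 m)^[m ^ k + m ^ (k + 1) - 1] ∘ vW m k =
        (f1 m)^[m ^ (k + 1)] ∘ vW m k) := by
  constructor
  · intro k p hp1 hp2
    funext u
    simp only [Function.comp_apply]
    exact RA_core m hm k p hp1 hp2 (vW m k u) (fun i hi => vW_zeros m hm k u i hi)
  · intro k
    funext u
    simp only [Function.comp_apply]
    have hw : ∀ i, i ≤ k → ((vW m k u) i : ℕ) = 0 := fun i hi => vW_zeros m hm k u i hi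
    have hsplit : m ^ k + m ^ (k + 1) - 1 = (m ^ k - 1) + m ^ (k + 1) := by
      have : 0 < m ^ k := pow_pos (by omega) k
      omega
    rw [hsplit, Function.iterate_add_apply]
    have hw' : ∀ i, i ≤ k → (((f1 m)^[m ^ (k + 1)] (vW m k u)) i : ℕ) = 0 := by
      intro i hik
      have e : m ^ (k + 1) = (m ^ (k + 1) - 1) + 1 := by
        have : 0 < m ^ (k + 1) := pow_pos (by omega) _
        omega
      rw [e, Function.iterate_succ_apply']
      exact f1_zeros m hm k _ (f1_iter_allmax m hm k (vW m k u) hw) i hik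
    have := RA_core m hm k 1 le_rfl (by omega) ((f1 m)^[m ^ (k + 1)] (vW m k u)) hw'
    rw [one_mul] at this
    exact this
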